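/- Let (L, A) be a tight G-graded 3-Lie-Rinehart algebra of maximal length (dim L_g = 1 = dim A_λ for all g ∈ Σ¹, λ ∈ Λ¹) which is G-multiplicative. If I is a graded ideal of L with I ⊆ L_1, then I = {0}. -/

import Mathlib

/-- The `Σ¹`-connection relation between elements of a group, relative to
supports `Sig` (of `L`) and `Lam` (of `A`). -/
def SigmaConn {G : Type*} [CommGroup G] (Sig Lam : Set G) (g h : G) : Prop :=
  ∃ (n : ℕ) (f : ℕ → G),
    f 0 = g ∧
    (∀ i ≤ 2 * n, f i ∈ Sig ∪ Sig⁻¹ ∪ Lam ∪ Lam⁻¹ ∪ {1}) ∧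
    (∀ m, 1 ≤ m → m < n → (∏ i ∈ Finset.range (2 * m + 1), f i) ∈ Sig ∪ Sig⁻¹) ∧
    ((∏ i ∈ Finset.range (2 * n + 1), f i) = h ∨
      (∏ i ∈ Finset.range (2 * n + 1), f i) = h⁻¹)

/-- The `Λ¹`-connection relation. -/
def LambdaConn {G : Type*} [CommGroup G] (Sig Lam : Set G) (l m : G) : Prop :=
  ∃ (n : ℕ) (f : ℕ → G),
    1 ≤ n ∧ f 0 = l ∧
    (∀ i < n, f i ∈ Sig ∪ Sig⁻¹ ∪ Lam ∪ Lam⁻¹ ∪ {1}) ∧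
    (∀ k, 2 ≤ k → k < n → (∏ i ∈ Finset.range k, f i) ∈ Lam ∪ Lam⁻¹) ∧
    ((∏ i ∈ Finset.range n, f i) = m ∨ (∏ i ∈ Finset.range n, f i) = m⁻¹)

/-- A `G`-graded `3`-Lie–Rinehart algebra `(L, A)`. -/
structure GradedThreeLieRinehart (F : Type*) [Field F] (G : Type*) [CommGroup G]
    [DecidableEq G] (A : Type*) [CommRing A] [Algebra F A]
    (L : Type*) [AddCommGroup L] [Module F L] [Module A L] [IsScalarTower F A L] where
  bracket : L →ₗ[F] L →ₗ[F] L →ₗ[F] L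
  rho : L →ₗ[F] L →ₗ[F] Module.End F A
  skew₁ : ∀ x y z : L, bracket x y z = - bracket y x z
  skew₂ : ∀ x y z : L, bracket x y z = - bracket x z y
  fund : ∀ x₁ x₂ x₃ y₁ y₂ : L, bracket (bracket x₁ x₂ x₃) y₁ y₂ =
      bracket (bracket x₁ y₁ y₂) x₂ x₃ + bracket (bracket x₂ y₁ y₂) x₃ x₁ +
      bracket (bracket x₃ y₁ y₂) x₁ x₂
  rep₁ : ∀ x₁ x₂ x₃ x₄ : L,
      rho x₁ x₂ * rho x₃ x₄ - rho x₃ x₄ * rho x₁ x₂ =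
      rho (bracket x₁ x₂ x₃) x₄ - rho (bracket x₁ x₂ x₄) x₃
  rep₂ : ∀ x₁ x₂ x₃ x₄ : L,
      rho (bracket x₁ x₂ x₃) x₄ =
      rho x₁ x₂ * rho x₃ x₄ + rho x₂ x₃ * rho x₁ x₄ + rho x₃ x₁ * rho x₂ x₄
  rho_der : ∀ x y : L, ∀ a b : A, rho x y (a * b) = a * rho x y b + rho x y a * b
  compat : ∀ x y z : L, ∀ a : A, bracket x y (a • z) = a • bracket x y z + rho x y a • z
  rho_smul_left : ∀ (a : A) (x y : L), rho (a • x) y = a • rho x y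
  rho_smul_right : ∀ (a : A) (x y : L), rho x (a • y) = a • rho x y
  Lg : G → Submodule F L
  Ag : G → Submodule F A
  decompL : DirectSum.IsInternal Lg
  decompA : DirectSum.IsInternal Ag
  bracket_grade : ∀ g h k : G, ∀ x ∈ Lg g, ∀ y ∈ Lg h, ∀ z ∈ Lg k,
      bracket x y z ∈ Lg (g * h * k)
  mul_grade : ∀ g h : G, ∀ a ∈ Ag g, ∀ b ∈ Ag h, a * b ∈ Ag (g * h)
  smul_grade : ∀ h g : G, ∀ a ∈ Ag h, ∀ x ∈ Lg g, a • x ∈ Lg (h * g)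
  rho_grade : ∀ g g' h : G, ∀ x ∈ Lg g, ∀ y ∈ Lg g', ∀ a ∈ Ag h,
      rho x y a ∈ Ag (g * g' * h)

namespace GradedThreeLieRinehart

variable {F : Type*} [Field F] {G : Type*} [CommGroup G] [DecidableEq G]
  {A : Type*} [CommRing A] [Algebra F A]
  {L : Type*} [AddCommGroup L] [Module F L] [Module A L] [IsScalarTower F A L]
  (T : GradedThreeLieRinehart F G A L)

/-- The support `Σ¹` of the grading of `L`. -/
def Sigma1 : Set G := {g | g ≠ 1 ∧ T.Lg g ≠ ⊥}

/-- The support `Λ¹` of the grading of `A`. -/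
def Lambda1 : Set G := {g | g ≠ 1 ∧ T.Ag g ≠ ⊥}

/-- `g` is `Σ¹`-connected to `h`. -/
def conn (g h : G) : Prop := SigmaConn T.Sigma1 T.Lambda1 g h

/-- `l` is `Λ¹`-connected to `m`. -/
def connA (l m : G) : Prop := LambdaConn T.Sigma1 T.Lambda1 l m

/-- The `Σ¹`-connection class `[g]` of `g`. -/
def classOf (g : G) : Set G := {h | h ∈ T.Sigma1 ∧ T.conn g h}

/-- The `Λ¹`-connection class `[λ]` of `l`. -/
def classOfA (l : G) : Set G := {m | m ∈ T.Lambda1 ∧ T.connA l m}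

/-- `L_{1,[g]}` for a class `C = [g]`. -/
def L1span (C : Set G) : Submodule F L :=
  Submodule.span F
    ({x | ∃ h ∈ C ∩ T.Lambda1, ∃ a ∈ T.Ag h⁻¹, ∃ y ∈ T.Lg h, x = a • y} ∪
     {x | ∃ h ∈ C, ∃ k ∈ C, ∃ y ∈ T.Lg h, ∃ z ∈ T.Lg k, ∃ w ∈ T.Lg (h * k)⁻¹,
        x = T.bracket y z w})

/-- `V_{[g]} = ⊕_{h ∈ [g]} L_h`. -/
def Vspan (C : Set G) : Submodule F L := ⨆ h ∈ C, T.Lg h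

/-- The ideal `I_{[g]} = L_{1,[g]} ⊕ V_{[g]}`. -/
def Iclass (g : G) : Submodule F L :=
  T.L1span (T.classOf g) ⊔ T.Vspan (T.classOf g)

/-- `Σ_{g∈Σ¹∩Λ¹} A_{g⁻¹}L_g + Σ_{h,k∈Σ¹}[L_h, L_k, L_{(hk)⁻¹}]`. -/
def Lone : Submodule F L :=
  Submodule.span F
    ({x | ∃ g ∈ T.Sigma1 ∩ T.Lambda1, ∃ a ∈ T.Ag g⁻¹, ∃ y ∈ T.Lg g, x = a • y} ∪
     {x | ∃ h ∈ T.Sigma1, ∃ k ∈ T.Sigma1, ∃ y ∈ T.Lg h, ∃ z ∈ T.Lg k,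
        ∃ w ∈ T.Lg (h * k)⁻¹, x = T.bracket y z w})

/-- `A_{1,[λ]}` for a class `C = [λ]`. -/
def A1span (C : Set G) : Submodule F A :=
  Submodule.span F
    ({x | ∃ m ∈ C, ∃ a ∈ T.Ag m⁻¹, ∃ b ∈ T.Ag m, x = a * b} ∪
     {x | ∃ h ∈ C ∩ T.Sigma1, ∃ k ∈ C ∩ T.Sigma1, ∃ y ∈ T.Lg h, ∃ z ∈ T.Lg k,
        ∃ a ∈ T.Ag (h * k)⁻¹, x = T.rho y z a})

/-- `A_{[λ]} = ⊕_{μ ∈ [λ]} A_μ`. -/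
def AVspan (C : Set G) : Submodule F A := ⨆ m ∈ C, T.Ag m

/-- `𝒜_{[λ]} = A_{1,[λ]} ⊕ A_{[λ]}`. -/
def Aclass (l : G) : Submodule F A :=
  T.A1span (T.classOfA l) ⊔ T.AVspan (T.classOfA l)

/-- `Σ_{μ∈Λ¹} A_{μ⁻¹}A_μ + Σ_{h,k∈Λ¹∩Σ¹} ρ(L_h,L_k)(A_{(hk)⁻¹})`. -/
def Aone : Submodule F A :=
  Submodule.span F
    ({x | ∃ m ∈ T.Lambda1, ∃ a ∈ T.Ag m⁻¹, ∃ b ∈ T.Ag m, x = a * b} ∪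
     {x | ∃ h ∈ T.Lambda1 ∩ T.Sigma1, ∃ k ∈ T.Lambda1 ∩ T.Sigma1, ∃ y ∈ T.Lg h,
        ∃ z ∈ T.Lg k, ∃ a ∈ T.Ag (h * k)⁻¹, x = T.rho y z a})

/-- A graded ideal of the graded `3`-Lie–Rinehart algebra `(L, A)`. -/
def IsGradedIdeal (I : Submodule F L) : Prop :=
  (I = ⨆ g : G, I ⊓ T.Lg g) ∧
  (∀ x ∈ I, ∀ y z : L, T.bracket x y z ∈ I) ∧
  (∀ (a : A), ∀ x ∈ I, a • x ∈ I) ∧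
  (∀ x ∈ I, ∀ y ∈ I, ∀ (a : A) (l : L), T.rho x y a • l ∈ I)

/-- The kernel of the representation `ρ`, as a set. -/
def kerRhoSet : Set L := {x | ∀ y : L, T.rho x y = 0}

/-- Graded simplicity of `(L, A)`. -/
def IsGrSimple : Prop :=
  (∃ x y z : L, T.bracket x y z ≠ 0) ∧
  ∀ I : Submodule F L, T.IsGradedIdeal I →
    I = ⊥ ∨ I = ⊤ ∨ (I : Set L) = T.kerRhoSet

/-- Tightness of a graded `3`-Lie–Rinehart algebra. -/
def Tight : Prop :=
  (∀ x : L, (∀ y z : L, T.bracket x y z = 0) → (∀ y : L, T.rho x y = 0) → x = 0) ∧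
  (∀ a : A, (∀ b : A, a * b = 0) → a = 0) ∧
  (∀ x : L, (∀ a : A, a • x = 0) → x = 0) ∧
  (∀ a : A, a ∈ Submodule.span F {x : A | ∃ b c : A, x = b * c}) ∧
  (∀ x : L, x ∈ Submodule.span F {y : L | ∃ (a : A) (z : L), y = a • z}) ∧
  T.Lg 1 = T.Lone ∧
  T.Ag 1 = T.Aone

/-- Maximal length: every nonzero homogeneous component has dimension one. -/
def MaximalLength : Prop :=
  (∀ g ∈ T.Sigma1, Module.finrank F (T.Lg g) = 1) ∧
  (∀ l ∈ T.Lambda1, Module.finrank F (T.Ag l) = 1)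

/-- `G`-multiplicativity. -/
def GMult : Prop :=
  (∀ g ∈ T.Sigma1, ∀ h ∈ T.Sigma1, ∀ k ∈ T.Sigma1, g * h * k ∈ T.Sigma1 →
    ∃ x ∈ T.Lg g, ∃ y ∈ T.Lg h, ∃ z ∈ T.Lg k, T.bracket x y z ≠ 0) ∧
  (∀ l ∈ T.Lambda1, ∀ g ∈ T.Sigma1, l * g ∈ T.Sigma1 →
    ∃ a ∈ T.Ag l, ∃ x ∈ T.Lg g, a • x ≠ (0 : L)) ∧
  (∀ l ∈ T.Lambda1, ∀ m ∈ T.Lambda1, l * m ∈ T.Lambda1 →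
    ∃ a ∈ T.Ag l, ∃ b ∈ T.Ag m, a * b ≠ 0)

/-- A graded simple ideal. -/
def IsGradedSimpleIdeal (I : Submodule F L) : Prop :=
  T.IsGradedIdeal I ∧ I ≠ ⊥ ∧
  ∀ J : Submodule F L, T.IsGradedIdeal J → J ≤ I → J = ⊥ ∨ J = I

end GradedThreeLieRinehart

section MyHelpers

variable {F : Type*} [Field F] {L : Type*} [AddCommGroup L] [Module F L]

lemma myProdFix (l : List (Module.End F L)) (v : L) (h : ∀ K ∈ l, K v = v) :
    l.prod v = v := by
  induction l with
  | nil => simp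
  | cons K t ih =>
    rw [List.prod_cons, Module.End.mul_apply,
      ih (fun K' hK' => h K' (List.mem_cons_of_mem _ hK'))]
    exact h K (List.mem_cons_self)

lemma myCommProd (l : List (Module.End F L)) (K : Module.End F L)
    (h : ∀ K' ∈ l, K * K' = K' * K) : K * l.prod = l.prod * K := by
  induction l with
  | nil => simp
  | cons K' t ih =>
    rw [List.prod_cons, ← mul_assoc, h K' (List.mem_cons_self), mul_assoc,
      ih (fun K'' h'' => h K'' (List.mem_cons_of_mem _ h'')), ← mul_assoc]

lemma myProdKill (l : List (Module.End F L)) (K : Module.End F L) (hK : K ∈ l)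
    (hcomm : ∀ K' ∈ l, K * K' = K' * K) (w : L) (hw : K w = 0) : l.prod w = 0 := by
  induction l with
  | nil => cases hK
  | cons K' t ih =>
    rw [List.prod_cons, Module.End.mul_apply]
    rcases List.mem_cons.mp hK with rfl | hKt
    · have hc : K * t.prod = t.prod * K :=
        myCommProd t K (fun K'' h'' => hcomm K'' (List.mem_cons_of_mem _ h''))
      rw [← Module.End.mul_apply, hc, Module.End.mul_apply, hw, map_zero]
    · rw [ih hKt (fun K'' h'' => hcomm K'' (List.mem_cons_of_mem _ h'')), map_zero]

lemma myCommHelper (a b a' b' : F) (X Y : Module.End F L) (h : X * Y = Y * X) :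
    (a • (1 : Module.End F L) + b • X) * (a' • (1 : Module.End F L) + b' • Y)
      = (a' • (1 : Module.End F L) + b' • Y) * (a • (1 : Module.End F L) + b • X) := by
  simp only [add_mul, mul_add, smul_mul_assoc, mul_smul_comm, one_mul, mul_one, smul_smul, h]
  simp only [smul_add, smul_smul]
  rw [mul_comm a' a, mul_comm a' b, mul_comm b' a, mul_comm b' b]
  abel

lemma myOneDim (W : Submodule F L) (h1 : Module.finrank F W = 1) (p : L) (hp : p ∈ W)
    (hp0 : p ≠ 0) {v : L} (hv : v ∈ W) : ∃ α : F, v = α • p := by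
  haveI : FiniteDimensional F W := FiniteDimensional.of_finrank_pos (by omega)
  have hpW : (⟨p, hp⟩ : W) ≠ 0 := by
    simpa [Submodule.mk_eq_zero] using hp0
  have hsp : Submodule.span F {(⟨p, hp⟩ : W)} = ⊤ := by
    apply Submodule.eq_top_of_finrank_eq
    rw [finrank_span_singleton hpW, h1]
  have hvW : (⟨v, hv⟩ : W) ∈ Submodule.span F {(⟨p, hp⟩ : W)} := by
    rw [hsp]; trivial
  rcases Submodule.mem_span_singleton.mp hvW with ⟨α, hα⟩
  refine ⟨α, ?_⟩
  have := congrArg (Subtype.val) hα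
  simpa using this.symm

lemma mySmul0 (c : F) (w : L) (hc : c ≠ 0) (h : c • w = 0) : w = 0 := by
  have := congrArg (fun u => c⁻¹ • u) h
  simpa [inv_smul_smul₀ hc] using this

variable {G : Type*} [CommGroup G] [DecidableEq G]
  {A : Type*} [CommRing A] [Algebra F A]
  [Module A L] [IsScalarTower F A L]

lemma mySmulFA (c : F) (a : A) (w : L) : a • (c • w) = c • (a • w) := by
  rw [← smul_one_smul A c w, ← mul_smul, mul_smul_comm, mul_one, smul_assoc]

variable (T : GradedThreeLieRinehart F G A L)

lemma myCyc (a b c : L) : T.bracket a b c = T.bracket b c a := by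
  rw [T.skew₁ a b c, T.skew₂ b a c, neg_neg]

lemma myBcomm (p q v : L) :
    T.bracket p p (T.bracket q q v) = T.bracket q q (T.bracket p p v) := by
  have hf := T.fund q q v p p
  rw [myCyc T v p p] at hf
  rw [T.skew₂ (T.bracket q p p) v q] at hf
  rw [add_neg_cancel, zero_add] at hf
  rw [myCyc T (T.bracket q q v) p p] at hf
  rw [myCyc T (T.bracket p p v) q q] at hf
  exact hf

lemma myDsq (p : L) (c : F) (hppp : T.bracket p p p = c • p)
    (hchar : ∀ w : L, w + w = 0) (v : L) :
    T.bracket p p (T.bracket p p v) = c • T.bracket p p v := by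
  have hf := T.fund p p p p v
  rw [hppp, map_smul, LinearMap.smul_apply, LinearMap.smul_apply] at hf
  rw [myCyc T (T.bracket p p v) p p] at hf
  rw [hchar (T.bracket p p (T.bracket p p v)), zero_add] at hf
  exact hf.symm

end MyHelpers


open GradedThreeLieRinehart in
/-- In a tight, `G`-multiplicative graded `3`-Lie–Rinehart algebra of maximal
length, any graded ideal of `L` contained in `L₁` is zero. -/
theorem graded_ideal_in_L1_eq_bot {F : Type*} [Field F] {G : Type*} [CommGroup G]
    [DecidableEq G] {A : Type*} [CommRing A] [Algebra F A]
    {L : Type*} [AddCommGroup L] [Module F L] [Module A L] [IsScalarTower F A L]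
    (T : GradedThreeLieRinehart F G A L)
    (ht : T.Tight) (hml : T.MaximalLength) (hgm : T.GMult) :
    ∀ I : Submodule F L, T.IsGradedIdeal I → I ≤ T.Lg 1 → I = ⊥ := by
  intro I hGI hIle
  classical
  obtain ⟨hIgr, hIbr, hIsm, hIrho⟩ := hGI
  have hAone : T.Ag 1 = T.Aone := ht.2.2.2.2.2.2
  have hfrL : ∀ g ∈ T.Sigma1, Module.finrank F (T.Lg g) = 1 := hml.1
  have hbrGM := hgm.1
  -- killing elements of I that live in a nontrivial degree
  have hzero : ∀ gg : G, gg ≠ 1 → ∀ v : L, v ∈ T.Lg gg → v ∈ I → v = 0 := by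
    intro gg hgg v hvg hvI
    have h1le : T.Lg 1 ≤ ⨆ j, ⨆ (_ : j ≠ gg), T.Lg j := by
      have h1 : T.Lg 1 ≤ ⨆ (_ : (1 : G) ≠ gg), T.Lg 1 :=
        le_iSup (fun _ : (1 : G) ≠ gg => T.Lg 1) (Ne.symm hgg)
      exact h1.trans (le_iSup (fun j => ⨆ (_ : j ≠ gg), T.Lg j) 1)
    have hmem : v ∈ T.Lg gg ⊓ (⨆ j, ⨆ (_ : j ≠ gg), T.Lg j) :=
      Submodule.mem_inf.mpr ⟨hvg, h1le (hIle hvI)⟩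
    exact (Submodule.mem_bot F).mp ((T.decompL.submodule_iSupIndep gg).le_bot hmem)
  -- homogeneous action of nontrivial degree kills I
  have hlemD : ∀ lam : G, lam ≠ 1 → ∀ a ∈ T.Ag lam, ∀ v ∈ I, a • v = 0 := by
    intro lam hlam a ha v hv
    have h1 : a • v ∈ T.Lg (lam * 1) := T.smul_grade lam 1 a ha v (hIle hv)
    rw [mul_one] at h1
    exact hzero lam hlam _ h1 (hIsm a v hv)
  -- brackets with I in the last slot stay in I
  have hbrI : ∀ v ∈ I, ∀ y z : L, T.bracket y z v ∈ I := by
    intro v hv y z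
    have h1 : T.bracket y z v = T.bracket v y z := (myCyc T v y z).symm
    rw [h1]
    exact hIbr v hv y z
  -- homogeneous brackets of nontrivial total degree kill I
  have hlemE : ∀ g k : G, g * k ≠ 1 → ∀ y ∈ T.Lg g, ∀ z ∈ T.Lg k, ∀ v ∈ I,
      T.bracket y z v = 0 := by
    intro g k hgk y hy z hz v hv
    have h1 : T.bracket y z v ∈ T.Lg (g * k * 1) := T.bracket_grade g k 1 y hy z hz v (hIle hv)
    rw [mul_one] at h1
    exact hzero (g * k) hgk _ h1 (hbrI v hv y z)
  -- the degree-one component of 1 acts as the identity on I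
  have htopA : (⨆ g, T.Ag g) = ⊤ := T.decompA.submodule_iSup_eq_top
  have h1mem : (1 : A) ∈ T.Ag 1 ⊔ (⨆ g : {g : G // g ≠ 1}, T.Ag g.1) := by
    have hle : (⨆ g, T.Ag g) ≤ T.Ag 1 ⊔ (⨆ g : {g : G // g ≠ 1}, T.Ag g.1) := by
      apply iSup_le
      intro g
      by_cases hg : g = 1
      · subst hg; exact le_sup_left
      · exact le_sup_of_le_right (le_iSup (fun g : {g : G // g ≠ 1} => T.Ag g.1) ⟨g, hg⟩)
    exact hle (htopA ▸ Submodule.mem_top)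
  obtain ⟨e₁, he₁, r, hr, hsum1⟩ := Submodule.mem_sup.mp h1mem
  have hrzero : ∀ v ∈ I, r • v = 0 := by
    intro v hv
    exact Submodule.iSup_induction (fun g : {g : G // g ≠ 1} => T.Ag g.1)
      (motive := fun a : A => a • v = 0) hr
      (fun i a hai => hlemD i.1 i.2 a hai v hv) (by simp)
      (fun a b ha hb => by simp only [add_smul, ha, hb, add_zero])
  have he₁v : ∀ v ∈ I, e₁ • v = v := by
    intro v hv
    have h1 : (e₁ + r) • v = v := by rw [hsum1, one_smul]
    rw [add_smul, hrzero v hv, add_zero] at h1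
    exact h1
  rw [hAone] at he₁
  obtain ⟨n, γ, gen, hgen⟩ := Submodule.mem_span_set'.mp he₁
  have hrepI : ∀ v ∈ I, v = ∑ i : Fin n, γ i • ((gen i : A) • v) := by
    intro v hv
    conv_lhs => rw [← he₁v v hv]
    rw [← hgen, Finset.sum_smul]
    exact Finset.sum_congr rfl fun i _ => smul_assoc _ _ _
  -- classification of the generators
  have hclass : ∀ i : Fin n, ∃ (p : L) (c : F) (d : A),
      (c ≠ 0 ∧ T.bracket p p p = c • p ∧ (∀ w : L, w + w = 0) ∧
        ∀ x' : L, (gen i : A) • x' =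
          T.bracket p p (d • x') - d • T.bracket p p x')
      ∨ (p = 0 ∧ ∀ x' ∈ I, (gen i : A) • x' = 0) := by
    intro i
    rcases (gen i).2 with hS1 | hS2
    · obtain ⟨m, hm, a, ha, b, hb, hab⟩ := hS1
      refine ⟨0, 1, 0, Or.inr ⟨rfl, ?_⟩⟩
      intro x' hx'
      rw [hab, mul_smul, hlemD m hm.1 b hb x' hx', smul_zero]
    · obtain ⟨h, hh, k, hk, y, hy, z, hz, a, ha, hxe⟩ := hS2
      have hSig : h ∈ T.Sigma1 := hh.2
      have hkSig : k ∈ T.Sigma1 := hk.2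
      by_cases hk1 : h * k = 1
      · by_cases hh1 : h * h = 1
        · -- the "bad" case : k = h, h * h = 1
          have hkh : k = h := by
            have h1 : h⁻¹ = h := inv_eq_of_mul_eq_one_right hh1
            have h2 : h⁻¹ = k := inv_eq_of_mul_eq_one_right hk1
            rw [← h2, h1]
          rw [hkh] at hz
          have hhhh : h * h * h = h := by rw [hh1, one_mul]
          obtain ⟨p, hpL, y₀, hy₀L, z₀, hz₀L, hbr0⟩ :=
            hbrGM h hSig h hSig h hSig (by rw [hhhh]; exact hSig)
          have hp0 : p ≠ 0 := by rintro rfl; exact hbr0 (by simp)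
          have hfr := hfrL h hSig
          obtain ⟨α₀, hy₀e⟩ := myOneDim (T.Lg h) hfr p hpL hp0 hy₀L
          obtain ⟨β₀, hz₀e⟩ := myOneDim (T.Lg h) hfr p hpL hp0 hz₀L
          have hppp0 : T.bracket p p p ≠ 0 := by
            intro h0
            apply hbr0
            rw [hy₀e, hz₀e]
            simp only [map_smul, LinearMap.smul_apply]
            rw [h0, smul_zero, smul_zero]
          have hmemp : T.bracket p p p ∈ T.Lg h := by
            have h1 := T.bracket_grade h h h p hpL p hpL p hpL
            rwa [hhhh] at h1
          obtain ⟨c, hcppp⟩ := myOneDim (T.Lg h) hfr p hpL hp0 hmemp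
          have hc0 : c ≠ 0 := by rintro rfl; rw [zero_smul] at hcppp; exact hppp0 hcppp
          have hcc : c + c = 0 := by
            have hs := T.skew₁ p p p
            rw [hcppp] at hs
            have h3 : c • p + c • p = 0 := eq_neg_iff_add_eq_zero.mp hs
            rw [← add_smul] at h3
            by_contra hne
            exact hp0 (mySmul0 _ _ hne h3)
          have hchar : ∀ w : L, w + w = 0 := by
            intro w
            have h2 : (2 : F) = 0 := by
              have h3 : (2 : F) * c = 0 := by rw [two_mul, hcc]
              rcases mul_eq_zero.mp h3 with h4 | h4
              · exact h4
              · exact absurd h4 hc0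
            calc w + w = (2 : F) • w := (two_smul F w).symm
              _ = 0 := by rw [h2, zero_smul]
          obtain ⟨α, hyα⟩ := myOneDim (T.Lg h) hfr p hpL hp0 hy
          obtain ⟨β, hzβ⟩ := myOneDim (T.Lg h) hfr p hpL hp0 hz
          refine ⟨p, c, (α * β) • a, Or.inl ⟨hc0, hcppp, hchar, ?_⟩⟩
          intro x'
          have hgeq : (gen i : A) = T.rho p p ((α * β) • a) := by
            rw [hxe, hyα, hzβ]
            simp only [map_smul, LinearMap.smul_apply, smul_smul]
            rw [mul_comm β α]
          rw [hgeq]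
          have hcomp := T.compat p p x' ((α * β) • a)
          rw [eq_sub_iff_add_eq, add_comm]
          exact hcomp.symm
        · -- k = h⁻¹ with h * h ≠ 1
          have hkinv : k = h⁻¹ := (inv_eq_of_mul_eq_one_right hk1).symm
          have hhhk : h * h * k = h := by rw [mul_assoc, hk1, mul_one]
          obtain ⟨p, hpL, y₀, hy₀L, q, hqL, hbr0⟩ :=
            hbrGM h hSig h hSig k hkSig (by rw [hhhk]; exact hSig)
          have hp0 : p ≠ 0 := by rintro rfl; exact hbr0 (by simp)
          have hfr := hfrL h hSig
          obtain ⟨α₀, hy₀e⟩ := myOneDim (T.Lg h) hfr p hpL hp0 hy₀L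
          have hppq0 : T.bracket p p q ≠ 0 := by
            intro h0
            apply hbr0
            rw [hy₀e]
            simp only [map_smul, LinearMap.smul_apply]
            rw [h0, smul_zero]
          have hq0 : q ≠ 0 := by
            rintro rfl; exact hppq0 (map_zero _)
          have hmemq : T.bracket p p q ∈ T.Lg h := by
            have h1 := T.bracket_grade h h k p hpL p hpL q hqL
            rwa [hhhk] at h1
          obtain ⟨c, hcpq⟩ := myOneDim (T.Lg h) hfr p hpL hp0 hmemq
          have hc0 : c ≠ 0 := by rintro rfl; rw [zero_smul] at hcpq; exact hppq0 hcpq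
          have hkk : k * k ≠ 1 := by
            intro hcon
            rw [hkinv, ← mul_inv] at hcon
            exact hh1 (inv_eq_one.mp hcon)
          have hM : ∀ w ∈ I, T.bracket p q w = 0 := by
            intro w hw
            have hf := T.fund p p q q w
            rw [hcpq, map_smul, LinearMap.smul_apply, LinearMap.smul_apply] at hf
            rw [T.skew₂ (T.bracket p q w) q p] at hf
            rw [add_neg_cancel, zero_add] at hf
            rw [hlemE k k hkk q hqL q hqL w hw] at hf
            simp only [map_zero, LinearMap.zero_apply] at hf
            by_contra hne
            exact hne (mySmul0 _ _ hc0 hf)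
          obtain ⟨α, hyα⟩ := myOneDim (T.Lg h) hfr p hpL hp0 hy
          obtain ⟨β, hzβ⟩ := myOneDim (T.Lg k) (hfrL k hkSig) q hqL hq0 hz
          have hyzw : ∀ w ∈ I, T.bracket y z w = 0 := by
            intro w hw
            rw [hyα, hzβ]
            simp only [map_smul, LinearMap.smul_apply]
            rw [hM w hw, smul_zero, smul_zero]
          refine ⟨0, 1, 0, Or.inr ⟨rfl, ?_⟩⟩
          intro x' hx'
          have hcomp := T.compat y z x' a
          rw [hyzw x' hx', hyzw (a • x') (hIsm a x' hx'), smul_zero, zero_add] at hcomp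
          rw [hxe]
          exact hcomp.symm
      · -- h * k ≠ 1
        refine ⟨0, 1, 0, Or.inr ⟨rfl, ?_⟩⟩
        intro x' hx'
        have hinv : (h * k)⁻¹ ≠ 1 := fun hcon => hk1 (inv_eq_one.mp hcon)
        have hax : a • x' = 0 := hlemD _ hinv a ha x' hx'
        have hbr : T.bracket y z x' = 0 := hlemE h k hk1 y hy z hz x' hx'
        have hcomp := T.compat y z x' a
        rw [hax, hbr, map_zero, smul_zero, zero_add] at hcomp
        rw [hxe]
        exact hcomp.symm
  choose p c d hpcd using hclass
  set B : Fin n → Module.End F L := fun i => T.bracket (p i) (p i) with hBdef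
  have hBap : ∀ i w, B i w = T.bracket (p i) (p i) w := fun i w => rfl
  have hB0 : ∀ i, p i = 0 → ∀ w, B i w = 0 := by
    intro i hpi w
    rw [hBap, hpi]
    simp only [map_zero, LinearMap.zero_apply]
  have hBcomm : ∀ i j w, B i (B j w) = B j (B i w) := by
    intro i j w
    rw [hBap, hBap, hBap, hBap]
    exact myBcomm T (p i) (p j) w
  have hBmem : ∀ i, ∀ v ∈ I, B i v ∈ I := by
    intro i v hv
    rw [hBap]
    exact hbrI v hv (p i) (p i)
  have hREC : ∀ ℓ : List (Fin n), ∀ v, v ∈ I →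
      (∀ i : Fin n, i ∉ ℓ → (B i v = 0 ∨ B i v = c i • v)) → v = 0 := by
    intro ℓ
    induction ℓ with
    | nil =>
      intro v hv heig
      set aa : Fin n → F := fun i => if B i v = 0 then 1 else 0 with haa
      set bb : Fin n → F := fun i => if B i v = 0 then -(c i)⁻¹ else (c i)⁻¹ with hbb
      set κ : Fin n → Module.End F L :=
        fun i => aa i • (1 : Module.End F L) + bb i • B i with hκ
      have hκapp : ∀ i w, κ i w = aa i • w + bb i • B i w := by
        intro i w
        rw [hκ]
        simp [LinearMap.add_apply, LinearMap.smul_apply, Module.End.one_apply]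
      have hκfix : ∀ i, κ i v = v := by
        intro i
        rw [hκapp]
        by_cases hbv : B i v = 0
        · have haai : aa i = 1 := by simp [haa, hbv]
          have hbbi : bb i = -(c i)⁻¹ := by simp [hbb, hbv]
          rw [haai, hbbi, hbv, one_smul, smul_zero, add_zero]
        · have hb' : B i v = c i • v := (heig i List.not_mem_nil).resolve_left hbv
          have hc0 : c i ≠ 0 := by
            rcases hpcd i with ⟨hc0, _, _, _⟩ | ⟨hp0, _⟩
            · exact hc0
            · exact absurd (hB0 i hp0 v) hbv
          have haai : aa i = 0 := by simp [haa, hbv]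
          have hbbi : bb i = (c i)⁻¹ := by simp [hbb, hbv]
          rw [haai, hbbi, hb', zero_smul, zero_add, smul_smul, inv_mul_cancel₀ hc0, one_smul]
      have hκkill : ∀ i, κ i (γ i • ((gen i : A) • v)) = 0 := by
        intro i
        rcases hpcd i with ⟨hc0, hppp, hchar, hgenId⟩ | ⟨hp0, hgood⟩
        · have hBB : ∀ w, B i (B i w) = c i • B i w := by
            intro w
            rw [hBap, hBap, hBap]
            exact myDsq T (p i) (c i) hppp hchar w
          have hgenB : ∀ x' : L, (gen i : A) • x' = B i (d i • x') - d i • B i x' := by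
            intro x'
            rw [hBap, hBap]
            exact hgenId x'
          by_cases hbv : B i v = 0
          · have hterm : (gen i : A) • v = B i (d i • v) := by
              rw [hgenB v, hbv, smul_zero, sub_zero]
            rw [hterm, hκapp, LinearMap.map_smul (B i) (γ i) (B i (d i • v)),
              hBB (d i • v)]
            have haai : aa i = 1 := by simp [haa, hbv]
            have hbbi : bb i = -(c i)⁻¹ := by simp [hbb, hbv]
            rw [haai, hbbi]
            simp only [one_smul, smul_smul, one_mul]
            have hs : -(c i)⁻¹ * (γ i * c i) = -(γ i) := by
              rw [mul_comm (γ i) (c i), neg_mul, ← mul_assoc, inv_mul_cancel₀ hc0, one_mul]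
            rw [hs, neg_smul]
            exact add_neg_cancel _
          · have hb' : B i v = c i • v := (heig i List.not_mem_nil).resolve_left hbv
            have hterm : (gen i : A) • v = B i (d i • v) - c i • (d i • v) := by
              rw [hgenB v, hb', mySmulFA]
            have hkill0 : B i (B i (d i • v) - c i • (d i • v)) = 0 := by
              rw [map_sub, LinearMap.map_smul (B i) (c i) (d i • v), hBB (d i • v), sub_self]
            rw [hterm, hκapp]
            have haai : aa i = 0 := by simp [haa, hbv]
            have hbbi : bb i = (c i)⁻¹ := by simp [hbb, hbv]
            rw [haai, hbbi,
              LinearMap.map_smul (B i) (γ i) (B i (d i • v) - c i • (d i • v)),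
              hkill0, smul_zero, smul_zero, zero_smul, zero_add]
        · rw [hgood v hv, smul_zero, map_zero]
      have hBijcomm : ∀ i j : Fin n, B i * B j = B j * B i := by
        intro i j
        ext w
        rw [Module.End.mul_apply, Module.End.mul_apply]
        exact hBcomm i j w
      have hκcomm : ∀ i j : Fin n, κ i * κ j = κ j * κ i := by
        intro i j
        rw [hκ]
        exact myCommHelper (aa i) (bb i) (aa j) (bb j) (B i) (B j) (hBijcomm i j)
      have hPv : ((List.finRange n).map κ).prod v = v := by
        apply myProdFix
        intro K hK
        rcases List.mem_map.mp hK with ⟨i, _, rfl⟩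
        exact hκfix i
      have hPterm : ∀ i : Fin n,
          ((List.finRange n).map κ).prod (γ i • ((gen i : A) • v)) = 0 := by
        intro i
        refine myProdKill _ (κ i) (List.mem_map.mpr ⟨i, List.mem_finRange i, rfl⟩)
          ?_ _ (hκkill i)
        intro K' hK'
        rcases List.mem_map.mp hK' with ⟨j, _, rfl⟩
        exact hκcomm i j
      have hrepv := hrepI v hv
      calc v = ((List.finRange n).map κ).prod v := hPv.symm
        _ = ((List.finRange n).map κ).prod (∑ i : Fin n, γ i • ((gen i : A) • v)) := by
            rw [← hrepv]
        _ = ∑ i : Fin n, ((List.finRange n).map κ).prod (γ i • ((gen i : A) • v)) :=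
            map_sum _ _ _
        _ = 0 := by simp only [hPterm, Finset.sum_const_zero]
    | cons i₀ t ih =>
      intro v hv heig
      rcases hpcd i₀ with ⟨hc0, hppp, hchar, _⟩ | ⟨hp0, _⟩
      · have hBB : ∀ w, B i₀ (B i₀ w) = c i₀ • B i₀ w := by
          intro w
          rw [hBap, hBap, hBap]
          exact myDsq T (p i₀) (c i₀) hppp hchar w
        have hv1I : (c i₀)⁻¹ • B i₀ v ∈ I := I.smul_mem _ (hBmem i₀ v hv)
        have hv0I : v - (c i₀)⁻¹ • B i₀ v ∈ I := I.sub_mem hv hv1I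
        have hkey : ∀ j : Fin n, j ∉ t → j ≠ i₀ →
            (B j ((c i₀)⁻¹ • B i₀ v) = 0 ∨
              B j ((c i₀)⁻¹ • B i₀ v) = c j • ((c i₀)⁻¹ • B i₀ v)) := by
          intro j hjt hji
          have hev := heig j (by simp [List.mem_cons, hji, hjt])
          rcases hev with h0 | hc
          · left
            rw [LinearMap.map_smul (B j) ((c i₀)⁻¹) (B i₀ v), hBcomm j i₀ v, h0,
              map_zero, smul_zero]
          · right
            calc B j ((c i₀)⁻¹ • B i₀ v)
                = (c i₀)⁻¹ • B j (B i₀ v) := map_smul _ _ _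
              _ = (c i₀)⁻¹ • B i₀ (B j v) := by rw [hBcomm j i₀ v]
              _ = (c i₀)⁻¹ • B i₀ (c j • v) := by rw [hc]
              _ = (c i₀)⁻¹ • (c j • B i₀ v) := by
                  rw [LinearMap.map_smul (B i₀) (c j) v]
              _ = c j • ((c i₀)⁻¹ • B i₀ v) := smul_comm _ _ _
        have heig1 : ∀ j : Fin n, j ∉ t →
            (B j ((c i₀)⁻¹ • B i₀ v) = 0 ∨
              B j ((c i₀)⁻¹ • B i₀ v) = c j • ((c i₀)⁻¹ • B i₀ v)) := by
          intro j hjt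
          by_cases hji : j = i₀
          · right
            rw [hji, LinearMap.map_smul (B i₀) ((c i₀)⁻¹) (B i₀ v), hBB v,
              inv_smul_smul₀ hc0, smul_inv_smul₀ hc0]
          · exact hkey j hjt hji
        have heig0 : ∀ j : Fin n, j ∉ t →
            (B j (v - (c i₀)⁻¹ • B i₀ v) = 0 ∨
              B j (v - (c i₀)⁻¹ • B i₀ v) = c j • (v - (c i₀)⁻¹ • B i₀ v)) := by
          intro j hjt
          by_cases hji : j = i₀
          · left
            rw [hji, map_sub, LinearMap.map_smul (B i₀) ((c i₀)⁻¹) (B i₀ v), hBB v,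
              inv_smul_smul₀ hc0, sub_self]
          · have hev := heig j (by simp [List.mem_cons, hji, hjt])
            rcases hev with h0 | hc
            · left
              rw [map_sub, LinearMap.map_smul (B j) ((c i₀)⁻¹) (B i₀ v), hBcomm j i₀ v,
                h0, map_zero, smul_zero, sub_zero]
            · right
              have h1 : B j ((c i₀)⁻¹ • B i₀ v) = c j • ((c i₀)⁻¹ • B i₀ v) := by
                calc B j ((c i₀)⁻¹ • B i₀ v)
                    = (c i₀)⁻¹ • B j (B i₀ v) := map_smul _ _ _
                  _ = (c i₀)⁻¹ • B i₀ (B j v) := by rw [hBcomm j i₀ v]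
                  _ = (c i₀)⁻¹ • B i₀ (c j • v) := by rw [hc]
                  _ = (c i₀)⁻¹ • (c j • B i₀ v) := by
                      rw [LinearMap.map_smul (B i₀) (c j) v]
                  _ = c j • ((c i₀)⁻¹ • B i₀ v) := smul_comm _ _ _
              rw [map_sub, hc, h1, smul_sub]
        have h1 := ih ((c i₀)⁻¹ • B i₀ v) hv1I heig1
        have h0 := ih (v - (c i₀)⁻¹ • B i₀ v) hv0I heig0
        have hveq : (v - (c i₀)⁻¹ • B i₀ v) + (c i₀)⁻¹ • B i₀ v = v := by abel
        rw [← hveq, h0, h1, add_zero]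
      · apply ih v hv
        intro j hjt
        by_cases hji : j = i₀
        · subst hji
          left
          exact hB0 j hp0 v
        · exact heig j (by simp [List.mem_cons, hji, hjt])
  rw [eq_bot_iff]
  intro x hx
  exact (Submodule.mem_bot F).mpr
    (hREC (List.finRange n) x hx (fun i hi => absurd (List.mem_finRange i) hi))
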